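/- Every symmetry of the 24-cell permutes the three colour classes of its facets: if φ is a linear isometry equivalence of EuclideanSpace ℝ (Fin 4) with φ '' V = V, then each of the image sets φ '' G, φ '' R, φ '' B equals one of the sets G, R, B (and the three images are pairwise distinct, so φ induces a permutation of {G, R, B}). -/

import Mathlib

open scoped RealInnerProductSpace Pointwise

/-- The `i`-th standard basis vector of `EuclideanSpace ℝ (Fin 4)`. -/
noncomputable def stdV (i : Fin 4) : EuclideanSpace ℝ (Fin 4) :=
  EuclideanSpace.single i (1 : ℝ)

/-- The 24 vertices of the 24-cell: all permutations of the coordinates of `(±1, ±1, 0, 0)`. -/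
def cellV : Set (EuclideanSpace ℝ (Fin 4)) :=
  {x | ∃ i j : Fin 4, i ≠ j ∧ ∃ ε δ : ℝ, (ε = 1 ∨ ε = -1) ∧ (δ = 1 ∨ δ = -1) ∧
    x = ε • stdV i + δ • stdV j}

/-- The 8 green vectors `±eᵢ`. -/
def colG : Set (EuclideanSpace ℝ (Fin 4)) :=
  {x | ∃ i : Fin 4, x = stdV i ∨ x = -stdV i}

/-- The 8 red vectors `(±1/2, ±1/2, ±1/2, ±1/2)` with an even number of minus signs. -/
def colR : Set (EuclideanSpace ℝ (Fin 4)) :=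
  {x | ∃ ε : Fin 4 → ℝ, (∀ i, ε i = 1 ∨ ε i = -1) ∧ (∏ i, ε i) = 1 ∧ ∀ i, x i = ε i / 2}

/-- The 8 blue vectors `(±1/2, ±1/2, ±1/2, ±1/2)` with an odd number of minus signs. -/
def colB : Set (EuclideanSpace ℝ (Fin 4)) :=
  {x | ∃ ε : Fin 4 → ℝ, (∀ i, ε i = 1 ∨ ε i = -1) ∧ (∏ i, ε i) = -1 ∧ ∀ i, x i = ε i / 2}

/-- The polar of a subset of `EuclideanSpace ℝ (Fin 4)`. -/
def polarSet (S : Set (EuclideanSpace ℝ (Fin 4))) : Set (EuclideanSpace ℝ (Fin 4)) :=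
  {y | ∀ x ∈ S, ⟪x, y⟫ ≤ 1}

/- ### Auxiliary material -/

lemma inner_stdV (i j : Fin 4) : ⟪stdV i, stdV j⟫ = if j = i then 1 else 0 := by
  simp [stdV, EuclideanSpace.inner_single_left, eq_comm]

lemma inner_stdV_left (i : Fin 4) (x : EuclideanSpace ℝ (Fin 4)) : ⟪stdV i, x⟫ = x i := by
  simp [stdV, EuclideanSpace.inner_single_left]

lemma stdV_apply (i m : Fin 4) : stdV i m = if m = i then 1 else 0 := by
  simp [stdV, EuclideanSpace.single_apply]

lemma sgnSum4 {η : Fin 4 → ℝ} (h : ∀ i, η i = 1 ∨ η i = -1) (hp : (∏ i, η i) = 1) :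
    (∑ i, η i) ≠ 2 ∧ (∑ i, η i) ≠ -2 := by
  rw [Fin.prod_univ_four] at hp
  rw [Fin.sum_univ_four]
  rcases h 0 with h0|h0 <;> rcases h 1 with h1|h1 <;> rcases h 2 with h2|h2 <;>
    rcases h 3 with h3|h3 <;> rw [h0,h1,h2,h3] at hp ⊢ <;> norm_num at hp <;> norm_num

lemma sgnSum4' {η : Fin 4 → ℝ} (h : ∀ i, η i = 1 ∨ η i = -1) (hp : (∏ i, η i) = -1) :
    (∑ i, η i) = 2 ∨ (∑ i, η i) = -2 := by
  rw [Fin.prod_univ_four] at hp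
  rw [Fin.sum_univ_four]
  rcases h 0 with h0|h0 <;> rcases h 1 with h1|h1 <;> rcases h 2 with h2|h2 <;>
    rcases h 3 with h3|h3 <;> rw [h0,h1,h2,h3] at hp ⊢ <;> norm_num at hp <;> norm_num

lemma inner_half {x y : EuclideanSpace ℝ (Fin 4)} {ε ε' : Fin 4 → ℝ}
    (hx : ∀ i, x i = ε i / 2) (hy : ∀ i, y i = ε' i / 2) :
    ⟪x, y⟫ = (∑ i, ε i * ε' i) / 4 := by
  simp only [PiLp.inner_apply, RCLike.inner_apply, starRingEnd_apply, star_trivial]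
  rw [Finset.sum_div]
  refine Finset.sum_congr rfl fun i _ => by rw [hx i, hy i]; ring

lemma innGG {g g' : EuclideanSpace ℝ (Fin 4)} (hg : g ∈ colG) (hg' : g' ∈ colG) :
    ⟪g, g'⟫ ≠ 1/2 ∧ ⟪g, g'⟫ ≠ -(1/2) := by
  obtain ⟨i, hi⟩ := hg; obtain ⟨j, hj⟩ := hg'
  rcases hi with rfl|rfl <;> rcases hj with rfl|rfl <;>
    simp only [inner_neg_neg, inner_neg_left, inner_neg_right, inner_stdV] <;>
    by_cases h : j = i <;> simp [h] <;> norm_num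

lemma innGH {g h : EuclideanSpace ℝ (Fin 4)} (hg : g ∈ colG) {ε : Fin 4 → ℝ}
    (hε : ∀ i, ε i = 1 ∨ ε i = -1) (hh : ∀ i, h i = ε i / 2) :
    ⟪g, h⟫ = 1/2 ∨ ⟪g, h⟫ = -(1/2) := by
  obtain ⟨i, hi⟩ := hg
  rcases hi with rfl|rfl <;>
    [rw [inner_stdV_left]; rw [show (-stdV i : EuclideanSpace ℝ (Fin 4)) = (-1 : ℝ) • stdV i by
        module, real_inner_smul_left, inner_stdV_left]] <;>
    rw [hh i] <;> rcases hε i with h1|h1 <;> rw [h1] <;> norm_num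

lemma innRR {x y : EuclideanSpace ℝ (Fin 4)} (hx : x ∈ colR) (hy : y ∈ colR) :
    ⟪x, y⟫ ≠ 1/2 ∧ ⟪x, y⟫ ≠ -(1/2) := by
  obtain ⟨ε, hε, hp, hc⟩ := hx; obtain ⟨ε', hε', hp', hc'⟩ := hy
  rw [inner_half hc hc']
  have := sgnSum4 (η := fun i => ε i * ε' i)
    (fun i => by rcases hε i with h|h <;> rcases hε' i with h'|h' <;> simp [h, h'])
    (by rw [Finset.prod_mul_distrib, hp, hp']; norm_num)
  constructor <;> intro h <;> [exact this.1 (by linarith); exact this.2 (by linarith)]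

lemma innBB {x y : EuclideanSpace ℝ (Fin 4)} (hx : x ∈ colB) (hy : y ∈ colB) :
    ⟪x, y⟫ ≠ 1/2 ∧ ⟪x, y⟫ ≠ -(1/2) := by
  obtain ⟨ε, hε, hp, hc⟩ := hx; obtain ⟨ε', hε', hp', hc'⟩ := hy
  rw [inner_half hc hc']
  have := sgnSum4 (η := fun i => ε i * ε' i)
    (fun i => by rcases hε i with h|h <;> rcases hε' i with h'|h' <;> simp [h, h'])
    (by rw [Finset.prod_mul_distrib, hp, hp']; norm_num)
  constructor <;> intro h <;> [exact this.1 (by linarith); exact this.2 (by linarith)]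

lemma innRB {x y : EuclideanSpace ℝ (Fin 4)} (hx : x ∈ colR) (hy : y ∈ colB) :
    ⟪x, y⟫ = 1/2 ∨ ⟪x, y⟫ = -(1/2) := by
  obtain ⟨ε, hε, hp, hc⟩ := hx; obtain ⟨ε', hε', hp', hc'⟩ := hy
  rw [inner_half hc hc']
  have := sgnSum4' (η := fun i => ε i * ε' i)
    (fun i => by rcases hε i with h|h <;> rcases hε' i with h'|h' <;> simp [h, h'])
    (by rw [Finset.prod_mul_distrib, hp, hp']; norm_num)
  rcases this with h|h <;> [left; right] <;> rw [h] <;> norm_num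

/-- The midpoints of orthogonal pairs of vertices: an isometry-invariant description
of the 24 facet centres `colG ∪ colR ∪ colB`. -/
def midW : Set (EuclideanSpace ℝ (Fin 4)) :=
  {x | ∃ u ∈ cellV, ∃ v ∈ cellV, ⟪u, v⟫ = 0 ∧ x = (2⁻¹ : ℝ) • (u + v)}

lemma fin4_cover {i j k l : Fin 4} (hik : i≠k) (hil : i≠l) (hjk : j≠k) (hjl : j≠l)
    (hij : i≠j) (hkl : k≠l) (m : Fin 4) : m = i ∨ m = j ∨ m = k ∨ m = l := by
  simp only [Fin.ext_iff, ne_eq] at *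
  omega

lemma inner_expand {i j k l : Fin 4} (ε δ ε' δ' : ℝ) :
    ⟪ε • stdV i + δ • stdV j, ε' • stdV k + δ' • stdV l⟫ =
    ε * ε' * (if k = i then 1 else 0) + ε * δ' * (if l = i then 1 else 0)
    + δ * ε' * (if k = j then 1 else 0) + δ * δ' * (if l = j then 1 else 0) := by
  simp only [inner_add_left, inner_add_right, real_inner_smul_left, real_inner_smul_right,
    inner_stdV]
  ring

lemma midW_RB {i j k l : Fin 4} (hij : i ≠ j) (hkl : k ≠ l)
    (hik : k ≠ i) (hil : l ≠ i) (hjk : k ≠ j) (hjl : l ≠ j)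
    {ε δ ε' δ' : ℝ} (hε : ε = 1 ∨ ε = -1) (hδ : δ = 1 ∨ δ = -1)
    (hε' : ε' = 1 ∨ ε' = -1) (hδ' : δ' = 1 ∨ δ' = -1) :
    (2⁻¹ : ℝ) • ((ε • stdV i + δ • stdV j) + (ε' • stdV k + δ' • stdV l)) ∈ colR ∪ colB := by
  have cover := fin4_cover (Ne.symm hik) (Ne.symm hil) (Ne.symm hjk) (Ne.symm hjl) hij hkl
  set f : Fin 4 → ℝ :=
    fun m => if m = i then ε else if m = j then δ else if m = k then ε' else δ' with hf
  have hall : ∀ m, f m = 1 ∨ f m = -1 := by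
    intro m
    rcases cover m with rfl|rfl|rfl|rfl
    · simpa [hf] using hε
    · simpa [hf, hij.symm] using hδ
    · simpa [hf, hik, hjk] using hε'
    · simpa [hf, hil, hjl, hkl.symm] using hδ'
  have hcoord : ∀ m, ((2⁻¹ : ℝ) • ((ε • stdV i + δ • stdV j) + (ε' • stdV k + δ' • stdV l))) m
      = f m / 2 := by
    intro m
    have hxm : ((2⁻¹ : ℝ) • ((ε • stdV i + δ • stdV j) + (ε' • stdV k + δ' • stdV l))) m
        = 2⁻¹ * ((ε * (if m = i then 1 else 0) + δ * (if m = j then 1 else 0))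
          + (ε' * (if m = k then 1 else 0) + δ' * (if m = l then 1 else 0))) := by
      simp only [PiLp.smul_apply, PiLp.add_apply, smul_eq_mul, stdV_apply]
    rw [hxm, hf]
    rcases cover m with rfl|rfl|rfl|rfl
    · simp [hij, hik.symm, hil.symm] <;> ring
    · simp [hij.symm, hjk.symm, hjl.symm] <;> ring
    · simp [hik, hjk, hkl] <;> ring
    · simp [hil, hjl, hkl.symm] <;> ring
  have hprod : (∏ m, f m) = ε * δ * ε' * δ' := by
    have huniv : (Finset.univ : Finset (Fin 4)) = {i, j, k, l} := by
      symm
      apply Finset.eq_univ_of_card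
      rw [show ({i,j,k,l} : Finset (Fin 4)).card = 4 from by
        rw [Finset.card_insert_of_notMem (by simp [hij, hik.symm, hil.symm]),
          Finset.card_insert_of_notMem (by simp [hjk.symm, hjl.symm]),
          Finset.card_insert_of_notMem (by simp [hkl]), Finset.card_singleton]]
      rfl
    rw [huniv, Finset.prod_insert (by simp [hij, hik.symm, hil.symm]),
      Finset.prod_insert (by simp [hjk.symm, hjl.symm]),
      Finset.prod_insert (by simp [hkl]), Finset.prod_singleton]
    have fi : f i = ε := by simp [hf]
    have fj : f j = δ := by simp [hf, hij.symm]
    have fk : f k = ε' := by simp [hf, hik, hjk]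
    have fl : f l = δ' := by simp [hf, hil, hjl, hkl.symm]
    rw [fi, fj, fk, fl] <;> ring
  have : ε * δ * ε' * δ' = 1 ∨ ε * δ * ε' * δ' = -1 := by
    rcases hε with rfl|rfl <;> rcases hδ with rfl|rfl <;> rcases hε' with rfl|rfl <;>
      rcases hδ' with rfl|rfl <;> norm_num
  rcases this with h|h
  · exact Or.inl ⟨f, hall, hprod.trans h, hcoord⟩
  · exact Or.inr ⟨f, hall, hprod.trans h, hcoord⟩

lemma midW_subset : midW ⊆ colG ∪ colR ∪ colB := by
  rintro x ⟨u, ⟨i, j, hij, ε, δ, hε, hδ, rfl⟩, v, ⟨k, l, hkl, ε', δ', hε', hδ', rfl⟩, hiv, rfl⟩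
  rw [inner_expand] at hiv
  by_cases hik : k = i
  · subst hik
    by_cases hjl : l = j
    · subst hjl
      simp [Ne.symm hkl, Ne.symm hij, hij, hkl] at hiv
      have hcase : (ε' = ε ∧ δ' = -δ) ∨ (ε' = -ε ∧ δ' = δ) := by
        rcases hε with rfl|rfl <;> rcases hδ with rfl|rfl <;> rcases hε' with rfl|rfl <;>
          rcases hδ' with rfl|rfl <;> norm_num at hiv <;> norm_num
      rcases hcase with ⟨rfl, rfl⟩|⟨rfl, rfl⟩
      · refine Or.inl (Or.inl ⟨k, ?_⟩)
        rcases hε with rfl|rfl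
        · exact Or.inl (by module)
        · exact Or.inr (by module)
      · refine Or.inl (Or.inl ⟨l, ?_⟩)
        rcases hδ with rfl|rfl
        · exact Or.inl (by module)
        · exact Or.inr (by module)
    · exfalso
      simp [Ne.symm hkl, Ne.symm hij, hjl, hij, hkl] at hiv
      rcases hε with rfl|rfl <;> rcases hε' with rfl|rfl <;> norm_num at hiv
  · by_cases hil : l = i
    · subst hil
      by_cases hjk : k = j
      · subst hjk
        simp [hij, Ne.symm hij, hkl, Ne.symm hkl] at hiv
        have hcase : (δ' = ε ∧ ε' = -δ) ∨ (δ' = -ε ∧ ε' = δ) := by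
          rcases hε with rfl|rfl <;> rcases hδ with rfl|rfl <;> rcases hε' with rfl|rfl <;>
            rcases hδ' with rfl|rfl <;> norm_num at hiv <;> norm_num
        rcases hcase with ⟨rfl, rfl⟩|⟨rfl, rfl⟩
        · refine Or.inl (Or.inl ⟨l, ?_⟩)
          rcases hε with rfl|rfl
          · exact Or.inl (by module)
          · exact Or.inr (by module)
        · refine Or.inl (Or.inl ⟨k, ?_⟩)
          rcases hδ with rfl|rfl
          · exact Or.inl (by module)
          · exact Or.inr (by module)
      · exfalso
        simp [hik, hjk, hij, Ne.symm hij, hkl, Ne.symm hkl] at hiv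
        rcases hε with rfl|rfl <;> rcases hδ' with rfl|rfl <;> norm_num at hiv
    · by_cases hjk : k = j
      · subst hjk
        exfalso
        simp [hik, hil, hkl, Ne.symm hkl] at hiv
        rcases hδ with rfl|rfl <;> rcases hε' with rfl|rfl <;> norm_num at hiv
      · by_cases hjl : l = j
        · subst hjl
          exfalso
          simp [hik, hil, hjk, Ne.symm hij] at hiv
          rcases hδ with rfl|rfl <;> rcases hδ' with rfl|rfl <;> norm_num at hiv
        · rcases midW_RB hij hkl hik hil hjk hjl hε hδ hε' hδ' with h|h
          · exact Or.inl (Or.inr h)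
          · exact Or.inr h

lemma midW_supset : colG ∪ colR ∪ colB ⊆ midW := by
  rintro x ((⟨i, hx⟩ | ⟨ε, hε, hp, hc⟩) | ⟨ε, hε, hp, hc⟩)
  · -- green
    obtain ⟨j, hj⟩ : ∃ j : Fin 4, j ≠ i := by
      by_cases h : i = 0
      · exact ⟨1, by rw [h]; decide⟩
      · exact ⟨0, fun hc => h hc.symm⟩
    have key : ∀ σ : ℝ, (σ = 1 ∨ σ = -1) → (σ • stdV i : EuclideanSpace ℝ (Fin 4)) ∈ midW := by
      intro σ hσ
      refine ⟨σ • stdV i + (1 : ℝ) • stdV j, ⟨i, j, Ne.symm hj, σ, 1, hσ, Or.inl rfl, rfl⟩,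
        σ • stdV i + (-1 : ℝ) • stdV j, ⟨i, j, Ne.symm hj, σ, -1, hσ, Or.inr rfl, rfl⟩, ?_, ?_⟩
      · rw [inner_expand]
        simp [hj, Ne.symm hj]
        rcases hσ with rfl|rfl <;> norm_num
      · module
    rcases hx with rfl|rfl
    · simpa using key 1 (Or.inl rfl)
    · have := key (-1) (Or.inr rfl)
      rwa [show ((-1 : ℝ) • stdV i : EuclideanSpace ℝ (Fin 4)) = -stdV i by module] at this
  all_goals {
    refine ⟨ε 0 • stdV 0 + ε 1 • stdV 1, ⟨0, 1, by decide, ε 0, ε 1, hε 0, hε 1, rfl⟩,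
      ε 2 • stdV 2 + ε 3 • stdV 3, ⟨2, 3, by decide, ε 2, ε 3, hε 2, hε 3, rfl⟩, ?_, ?_⟩
    · rw [inner_expand]; simp +decide
    · ext m
      rw [hc m]
      fin_cases m <;>
        simp +decide [stdV_apply, PiLp.smul_apply, PiLp.add_apply] <;> ring
  }

lemma midW_eq : midW = colG ∪ colR ∪ colB := subset_antisymm midW_subset midW_supset

/-- Every symmetry of the 24-cell permutes the three colour classes of its facets. -/
theorem symmetry_permutes_colours
    (φ : EuclideanSpace ℝ (Fin 4) ≃ₗᵢ[ℝ] EuclideanSpace ℝ (Fin 4))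
    (hV : φ '' cellV = cellV) :
    (φ '' colG = colG ∨ φ '' colG = colR ∨ φ '' colG = colB) ∧
    (φ '' colR = colG ∨ φ '' colR = colR ∨ φ '' colR = colB) ∧
    (φ '' colB = colG ∨ φ '' colB = colR ∨ φ '' colB = colB) ∧
    φ '' colG ≠ φ '' colR ∧ φ '' colG ≠ φ '' colB ∧ φ '' colR ≠ φ '' colB := by
  -- the union is preserved
  set U : Set (EuclideanSpace ℝ (Fin 4)) := colG ∪ colR ∪ colB with hUdef
  have hU : φ '' U = U := by
    rw [hUdef, ← midW_eq]
    ext x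
    constructor
    · rintro ⟨y, ⟨u, hu, v, hv, huv, rfl⟩, rfl⟩
      refine ⟨φ u, hV ▸ ⟨u, hu, rfl⟩, φ v, hV ▸ ⟨v, hv, rfl⟩, ?_, ?_⟩
      · rw [φ.inner_map_map]; exact huv
      · simp
    · rintro ⟨u, hu, v, hv, huv, rfl⟩
      rw [← hV] at hu hv
      obtain ⟨u', hu', rfl⟩ := hu
      obtain ⟨v', hv', rfl⟩ := hv
      rw [φ.inner_map_map] at huv
      exact ⟨(2⁻¹ : ℝ) • (u' + v'), ⟨u', hu', v', hv', huv, rfl⟩, by simp⟩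
  -- the "same colour class" relation
  set S : EuclideanSpace ℝ (Fin 4) → Set (EuclideanSpace ℝ (Fin 4)) :=
    fun c => {w | w ∈ U ∧ ⟪c, w⟫ ≠ 1/2 ∧ ⟪c, w⟫ ≠ -(1/2)} with hSdef
  have memU_G : colG ⊆ U := fun w hw => Or.inl (Or.inl hw)
  have memU_R : colR ⊆ U := fun w hw => Or.inl (Or.inr hw)
  have memU_B : colB ⊆ U := fun w hw => Or.inr hw
  have classG : ∀ g ∈ colG, S g = colG := by
    intro g hg
    ext w
    constructor
    · rintro ⟨hw, h1, h2⟩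
      rcases hw with (hw|hw)|hw
      · exact hw
      · obtain ⟨ε, hε, _, hcw⟩ := hw
        rcases innGH hg hε hcw with h|h
        · exact absurd h h1
        · exact absurd h h2
      · obtain ⟨ε, hε, _, hcw⟩ := hw
        rcases innGH hg hε hcw with h|h
        · exact absurd h h1
        · exact absurd h h2
    · intro hw
      exact ⟨memU_G hw, (innGG hg hw).1, (innGG hg hw).2⟩
  have classR : ∀ r ∈ colR, S r = colR := by
    intro r hr
    obtain ⟨εr, hεr, _, hcr⟩ := hr
    ext w
    constructor
    · rintro ⟨hw, h1, h2⟩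
      rcases hw with (hw|hw)|hw
      · rcases innGH hw hεr hcr with h|h
        · exact absurd (real_inner_comm w r ▸ h) h1
        · exact absurd (real_inner_comm w r ▸ h) h2
      · exact hw
      · rcases innRB ⟨εr, hεr, ‹_›, hcr⟩ hw with h|h
        · exact absurd h h1
        · exact absurd h h2
    · intro hw
      exact ⟨memU_R hw, (innRR ⟨εr, hεr, ‹_›, hcr⟩ hw).1, (innRR ⟨εr, hεr, ‹_›, hcr⟩ hw).2⟩
  have classB : ∀ b ∈ colB, S b = colB := by
    intro b hb
    obtain ⟨εb, hεb, _, hcb⟩ := hb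
    ext w
    constructor
    · rintro ⟨hw, h1, h2⟩
      rcases hw with (hw|hw)|hw
      · rcases innGH hw hεb hcb with h|h
        · exact absurd (real_inner_comm w b ▸ h) h1
        · exact absurd (real_inner_comm w b ▸ h) h2
      · rcases innRB hw ⟨εb, hεb, ‹_›, hcb⟩ with h|h
        · exact absurd (real_inner_comm w b ▸ h) h1
        · exact absurd (real_inner_comm w b ▸ h) h2
      · exact hw
    · intro hw
      exact ⟨memU_B hw, (innBB ⟨εb, hεb, ‹_›, hcb⟩ hw).1, (innBB ⟨εb, hεb, ‹_›, hcb⟩ hw).2⟩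
  have imageS : ∀ c, φ '' S c = S (φ c) := by
    intro c
    ext x
    constructor
    · rintro ⟨w, ⟨hwU, h1, h2⟩, rfl⟩
      exact ⟨hU ▸ ⟨w, hwU, rfl⟩, by rwa [φ.inner_map_map], by rwa [φ.inner_map_map]⟩
    · rintro ⟨hxU, h1, h2⟩
      rw [← hU] at hxU
      obtain ⟨w, hwU, rfl⟩ := hxU
      rw [φ.inner_map_map] at h1 h2
      exact ⟨w, ⟨hwU, h1, h2⟩, rfl⟩
  -- a representative of each class and where it goes
  have mainStep : ∀ c ∈ U, ∀ C, S c = C → (φ '' C = colG ∨ φ '' C = colR ∨ φ '' C = colB) := by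
    intro c hc C hC
    have hφc : φ c ∈ U := hU ▸ ⟨c, hc, rfl⟩
    rw [← hC, imageS c]
    rcases hφc with (h|h)|h
    · exact Or.inl (classG _ h)
    · exact Or.inr (Or.inl (classR _ h))
    · exact Or.inr (Or.inr (classB _ h))
  -- representatives
  have hg0 : stdV 0 ∈ colG := ⟨0, Or.inl rfl⟩
  have hr0 : ((2⁻¹ : ℝ) • (stdV 0 + stdV 1 + stdV 2 + stdV 3) : EuclideanSpace ℝ (Fin 4)) ∈
      colR := by
    refine ⟨fun _ => 1, fun _ => Or.inl rfl, by simp, fun m => ?_⟩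
    fin_cases m <;> simp +decide [stdV_apply] <;> try norm_num
  have hb0 : ((2⁻¹ : ℝ) • (-stdV 0 + stdV 1 + stdV 2 + stdV 3) : EuclideanSpace ℝ (Fin 4)) ∈
      colB := by
    refine ⟨fun i => if i = 0 then -1 else 1, fun i => by by_cases h : i = 0 <;> simp [h],
      by simp +decide [Fin.prod_univ_four], fun m => ?_⟩
    fin_cases m <;> simp +decide [stdV_apply] <;> try norm_num
  -- distinctness
  have hGR : colG ≠ colR := by
    intro h
    have : stdV 0 ∈ colR := h ▸ hg0
    obtain ⟨ε, hε, _, hcw⟩ := this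
    have h0 := hcw 0
    rw [stdV_apply, if_pos rfl] at h0
    rcases hε 0 with h1|h1 <;> rw [h1] at h0 <;> norm_num at h0
  have hGB : colG ≠ colB := by
    intro h
    have : stdV 0 ∈ colB := h ▸ hg0
    obtain ⟨ε, hε, _, hcw⟩ := this
    have h0 := hcw 0
    rw [stdV_apply, if_pos rfl] at h0
    rcases hε 0 with h1|h1 <;> rw [h1] at h0 <;> norm_num at h0
  have hRB : colR ≠ colB := by
    intro h
    have hmem : ((2⁻¹ : ℝ) • (stdV 0 + stdV 1 + stdV 2 + stdV 3) : EuclideanSpace ℝ (Fin 4)) ∈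
        colB := h ▸ hr0
    obtain ⟨ε, hε, hp, hcw⟩ := hmem
    obtain ⟨ε', hε', hp', hcw'⟩ := hr0
    have : ∀ m, ε m = ε' m := by
      intro m
      have := (hcw m).symm.trans (hcw' m)
      field_simp at this
      exact this
    rw [show ε = ε' from funext this, hp'] at hp
    norm_num at hp
  refine ⟨mainStep _ (memU_G hg0) _ (classG _ hg0),
          mainStep _ (memU_R hr0) _ (classR _ hr0),
          mainStep _ (memU_B hb0) _ (classB _ hb0), ?_, ?_, ?_⟩
  · intro h
    exact hGR (Set.image_injective.mpr φ.injective h)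
  · intro h
    exact hGB (Set.image_injective.mpr φ.injective h)
  · intro h
    exact hRB (Set.image_injective.mpr φ.injective h)
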